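/- Let p be an odd prime, ℓ = (p−1)/2, (a_1,…,a_{p−1}) a strongly carefree tuple with m = ∏_{i=1}^{p−1} a_i^i > 1, α the real p-th root of m, K = ℚ(α), γ_j = α^j / ∏_{i=1}^{p−1} a_i^{⌊ij/p⌋}, and λ_j = γ_j²/(γ_ℓ γ_{ℓ+1}). Then for every 1 ≤ j ≤ ℓ, the shape parameter λ_j is irrational and generates K: λ_j ∉ ℚ and ℚ(λ_j) = K. -/

import Mathlib

open Finset

/-- A tuple `(a 1, …, a (p-1))` of positive integers is *strongly carefree* if each `a i`
is squarefree and the `a i` are pairwise coprime. -/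
def StronglyCarefree (p : ℕ) (a : ℕ → ℕ) : Prop :=
  (∀ i ∈ Finset.Icc 1 (p - 1), 0 < a i ∧ Squarefree (a i)) ∧
  (∀ i ∈ Finset.Icc 1 (p - 1), ∀ j ∈ Finset.Icc 1 (p - 1), i ≠ j → Nat.Coprime (a i) (a j))

/-- `m = ∏ a i ^ i` is not a perfect `p`-th power. -/
lemma aux_not_pow (p : ℕ) (hp : p.Prime) (a : ℕ → ℕ) (ha : StronglyCarefree p a)
    (m : ℕ) (hm : m = ∏ i ∈ Finset.Icc 1 (p - 1), a i ^ i) (hm1 : 1 < m) :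
    ∀ n : ℕ, n ^ p ≠ m := by
  intro n hn
  obtain ⟨hsq, hcop⟩ := ha
  -- find i with a i > 1
  have hex : ∃ i ∈ Finset.Icc 1 (p - 1), 1 < a i := by
    by_contra h
    push_neg at h
    have : m = 1 := by
      rw [hm]
      apply Finset.prod_eq_one
      intro i hi
      have h1 := (hsq i hi).1
      have h2 := h i hi
      have : a i = 1 := by omega
      simp [this]
    omega
  obtain ⟨i, hi, hai⟩ := hex
  obtain ⟨q, hq, hqd⟩ := Nat.exists_prime_and_dvd (n := a i) (by omega)
  have hm0 : m ≠ 0 := by omega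
  -- m.factorization q = i
  have hfac : m.factorization q = i := by
    rw [hm, Nat.factorization_prod (fun k hk => pow_ne_zero _ (hsq k hk).1.ne')]
    rw [Finset.sum_apply']
    rw [Finset.sum_eq_single_of_mem i hi]
    · rw [Nat.factorization_pow, Finsupp.smul_apply,
        Nat.factorization_eq_one_of_squarefree (hsq i hi).2 hq hqd]
      simp
    · intro k hk hki
      rw [Nat.factorization_pow, Finsupp.smul_apply,
        Nat.factorization_eq_zero_of_not_dvd, smul_zero]
      intro hqk
      have hco := hcop i hi k hk (Ne.symm hki)
      have : q ∣ Nat.gcd (a i) (a k) := Nat.dvd_gcd hqd hqk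
      rw [hco] at this
      exact hq.one_lt.ne' (Nat.eq_one_of_dvd_one this)
  have hdvd : p ∣ i := by
    have : m.factorization q = p * n.factorization q := by
      rw [← hn, Nat.factorization_pow]; simp
    exact ⟨n.factorization q, by omega⟩
  have hi' := Finset.mem_Icc.mp hi
  have := Nat.le_of_dvd (by omega) hdvd
  omega

theorem shape_parameter_generates_pure_prime_degree
    (p : ℕ) (hp : p.Prime) (hodd : Odd p)
    (ℓ : ℕ) (hℓ : ℓ = (p - 1) / 2)
    (a : ℕ → ℕ) (ha : StronglyCarefree p a)
    (m : ℕ) (hm : m = ∏ i ∈ Finset.Icc 1 (p - 1), a i ^ i) (hm1 : 1 < m)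
    (α : ℝ) (hαpos : 0 < α) (hαp : α ^ p = (m : ℝ))
    (γ : ℕ → ℝ)
    (hγ : ∀ j, γ j = α ^ j / ∏ i ∈ Finset.Icc 1 (p - 1), (a i : ℝ) ^ (i * j / p))
    (lam : ℕ → ℝ) (hlam : ∀ j, lam j = γ j ^ 2 / (γ ℓ * γ (ℓ + 1)))
    (K : IntermediateField ℚ ℝ) (hK : K = IntermediateField.adjoin ℚ {α}) :
    ∀ j ∈ Finset.Icc 1 ℓ,
      Irrational (lam j) ∧ IntermediateField.adjoin ℚ {lam j} = K := by
  intro j hj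
  obtain ⟨hj1, hjℓ⟩ := Finset.mem_Icc.mp hj
  obtain ⟨t, ht⟩ := hodd
  have hpℓ : p = 2 * ℓ + 1 := by omega
  have hp3 : 3 ≤ p := by
    have := hp.two_le; omega
  -- the denominators B
  set B : ℕ → ℕ := fun k => ∏ i ∈ Finset.Icc 1 (p - 1), a i ^ (i * k / p) with hB
  have hBpos : ∀ k, 0 < B k := by
    intro k
    apply Finset.prod_pos
    intro i hi
    exact pow_pos (ha.1 i hi).1 _
  have hγ' : ∀ k, γ k = α ^ k / (B k : ℝ) := by
    intro k
    rw [hγ, hB]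
    push_cast
    ring
  -- irrationality of α
  have hαirr : Irrational α := by
    apply irrational_nrt_of_notint_nrt p m (by exact_mod_cast hαp) _ hp.pos
    rintro ⟨y, hy⟩
    have hy0 : 0 < y := by
      by_contra h
      push_neg at h
      have : (y : ℝ) ≤ 0 := by exact_mod_cast h
      linarith [hαpos, hy ▸ this]
    have : (y.toNat) ^ p = m := by
      have : (y : ℝ) ^ p = (m : ℝ) := by rw [← hy]; exact hαp
      have h2 : y ^ p = (m : ℤ) := by exact_mod_cast this
      have : y = (y.toNat : ℤ) := (Int.toNat_of_nonneg hy0.le).symm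
      rw [this] at h2
      exact_mod_cast h2
    exact aux_not_pow p hp a ha m hm hm1 y.toNat this
  have hα0 : α ≠ 0 := hαpos.ne'
  -- key identity: lam j = c * α^(2j)
  set c : ℚ := (B ℓ * B (ℓ + 1) : ℚ) / ((m : ℚ) * (B j : ℚ) ^ 2) with hc
  have hc0 : c ≠ 0 := by
    rw [hc]
    have h1 := hBpos ℓ
    have h2 := hBpos (ℓ + 1)
    have h3 := hBpos j
    positivity
  have hαp' : α ^ (2 * ℓ + 1) = (m : ℝ) := by rw [← hpℓ]; exact hαp
  have key : lam j = (c : ℝ) * α ^ (2 * j) := by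
    rw [hlam, hγ', hγ', hγ', hc]
    have hBℓ : (B ℓ : ℝ) ≠ 0 := by exact_mod_cast (hBpos ℓ).ne'
    have hBℓ1 : (B (ℓ + 1) : ℝ) ≠ 0 := by exact_mod_cast (hBpos (ℓ + 1)).ne'
    have hBj : (B j : ℝ) ≠ 0 := by exact_mod_cast (hBpos j).ne'
    have hm0 : (m : ℝ) ≠ 0 := by positivity
    push_cast
    rw [div_pow, div_mul_div_comm, div_div_div_eq]
    rw [← pow_mul, ← pow_add]
    field_simp
    rw [show ℓ + (ℓ + 1) = 2 * ℓ + 1 by ring, hαp']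
    ring
  -- coprimality / Bezout
  have hcop : Nat.Coprime p (2 * j) := by
    rw [hp.coprime_iff_not_dvd]
    intro hd
    have := Nat.le_of_dvd (by omega) hd
    omega
  -- Bezout: α ∈ any field containing α^(2j)
  have bezout : ∃ u v : ℤ, (2 * j : ℤ) * u + (p : ℤ) * v = 1 := by
    have := Nat.gcd_eq_gcd_ab (2 * j) p
    rw [Nat.coprime_comm] at hcop
    rw [hcop] at this
    exact ⟨Nat.gcdA (2 * j) p, Nat.gcdB (2 * j) p, by push_cast at this ⊢; linarith⟩
  obtain ⟨u, v, huv⟩ := bezout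
  have hαrep : α = (α ^ (2 * j)) ^ u * ((m : ℝ)) ^ v := by
    rw [← hαp]
    rw [← zpow_natCast α (2 * j), ← zpow_natCast α p, ← zpow_mul, ← zpow_mul,
      ← zpow_add₀ hα0]
    rw [show ((2 * j : ℕ) : ℤ) * u + ((p : ℕ) : ℤ) * v = 1 from by push_cast; linarith]
    simp
  constructor
  · -- irrationality
    rw [key]
    apply Irrational.ratCast_mul _ hc0
    -- Irrational (α ^ (2*j))
    intro ⟨r, hr⟩
    apply hαirr
    refine ⟨r ^ u * (m : ℚ) ^ v, ?_⟩
    rw [hαrep, ← hr]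
    push_cast
    ring
  · -- generation
    rw [hK]
    apply le_antisymm
    · rw [IntermediateField.adjoin_simple_le_iff, key]
      exact mul_mem (SubfieldClass.ratCast_mem _ c)
        (pow_mem (IntermediateField.mem_adjoin_simple_self ℚ α) _)
    · rw [IntermediateField.adjoin_simple_le_iff]
      have h2j : α ^ (2 * j) ∈ IntermediateField.adjoin ℚ {lam j} := by
        have : α ^ (2 * j) = (c : ℝ)⁻¹ * lam j := by
          rw [key]
          field_simp
        rw [this]
        exact mul_mem (inv_mem (SubfieldClass.ratCast_mem _ c))
          (IntermediateField.mem_adjoin_simple_self ℚ (lam j))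
      rw [hαrep]
      exact mul_mem (IntermediateField.pow_mem _ h2j u)
        (IntermediateField.pow_mem _ (natCast_mem _ m) v)
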